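/- For the scalar inverse adjustment problem under the L∞-type objective: fix c ∈ ℝ and x⁰ ∈ ℝᴺ, x⁰ ≥ 0. The minimum of max_k(Γ_k + Δ_k) + (α + β) over nonnegative Γ, Δ, α, β subject to Σ_k(Δ_k - Γ_k)x⁰_k - α + β = c equals |c| · min(1, 1/Σ_k x⁰_k) if Σ_k x⁰_k > 0, and equals |c| if x⁰ = 0. -/
import Mathlib


/-- Single-constraint core of the IQTP under the L∞ norm: the minimum of
`max_k (Γ_k + Δ_k) + α + β` over nonnegative variables subject to
`Σ_k (Δ_k - Γ_k) x⁰_k - α + β = c` equals `|c| · min 1 (1 / Σ_k x⁰_k)` when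
`Σ_k x⁰_k > 0`, and equals `|c|` when `x⁰ = 0`. -/
theorem stmt_17 {N : ℕ} (hN : 0 < N) (c : ℝ) (x0 : Fin N → ℝ)
    (hx0 : ∀ k, 0 ≤ x0 k) :
    (0 < ∑ k, x0 k →
      IsLeast {t : ℝ | ∃ (Γ Δ : Fin N → ℝ) (α β : ℝ),
          (∀ k, 0 ≤ Γ k) ∧ (∀ k, 0 ≤ Δ k) ∧ 0 ≤ α ∧ 0 ≤ β ∧
          (∑ k, (Δ k - Γ k) * x0 k) - α + β = c ∧
          t = Finset.univ.sup'
              (Finset.univ_nonempty_iff.mpr (Fin.pos_iff_nonempty.mp hN))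
              (fun k => Γ k + Δ k) + (α + β)}
        (|c| * min 1 (1 / ∑ k, x0 k))) ∧
    (x0 = 0 →
      IsLeast {t : ℝ | ∃ (Γ Δ : Fin N → ℝ) (α β : ℝ),
          (∀ k, 0 ≤ Γ k) ∧ (∀ k, 0 ≤ Δ k) ∧ 0 ≤ α ∧ 0 ≤ β ∧
          (∑ k, (Δ k - Γ k) * x0 k) - α + β = c ∧
          t = Finset.univ.sup'
              (Finset.univ_nonempty_iff.mpr (Fin.pos_iff_nonempty.mp hN))
              (fun k => Γ k + Δ k) + (α + β)}
        |c|) := by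
  have hne : (Finset.univ : Finset (Fin N)).Nonempty :=
    Finset.univ_nonempty_iff.mpr (Fin.pos_iff_nonempty.mp hN)
  have hmaxsub : max c 0 - max (-c) 0 = c := by
    rcases le_total c 0 with h | h
    · rw [max_eq_right h, max_eq_left (neg_nonneg.mpr h)]; ring
    · rw [max_eq_left h, max_eq_right (neg_nonpos.mpr h)]; ring
  have hmaxadd : max c 0 + max (-c) 0 = |c| := by
    rcases le_total c 0 with h | h
    · rw [max_eq_right h, max_eq_left (neg_nonneg.mpr h), abs_of_nonpos h]; ring
    · rw [max_eq_left h, max_eq_right (neg_nonpos.mpr h), abs_of_nonneg h]; ring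
  constructor
  · intro hS
    set S := ∑ k, x0 k with hSdef
    constructor
    · -- membership
      by_cases h1 : S ≤ 1
      · have hmin : min 1 (1 / S) = 1 :=
          min_eq_left (one_le_one_div hS h1)
        refine ⟨fun _ => 0, fun _ => 0, max (-c) 0, max c 0,
          fun _ => le_rfl, fun _ => le_rfl, le_max_right _ _, le_max_right _ _, by
            simp; linarith [hmaxsub], ?_⟩
        rw [hmin]
        rw [Finset.sup'_const]
        simp
        linarith [hmaxadd]
      · push_neg at h1
        have hmin : min 1 (1 / S) = 1 / S :=
          min_eq_right (by rw [div_le_one hS]; linarith)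
        refine ⟨fun _ => max (-c) 0 / S, fun _ => max c 0 / S, 0, 0,
          fun _ => div_nonneg (le_max_right _ _) hS.le,
          fun _ => div_nonneg (le_max_right _ _) hS.le, le_rfl, le_rfl, ?_, ?_⟩
        · have e : max c 0 / S - max (-c) 0 / S = c / S := by
            rw [div_sub_div_same, hmaxsub]
          simp_rw [e]
          rw [← Finset.mul_sum, ← hSdef, div_mul_cancel₀ _ hS.ne']
          ring
        · rw [hmin, Finset.sup'_const]
          field_simp
          linarith [hmaxadd]
    · -- lower bound
      rintro t ⟨Γ, Δ, α, β, hΓ, hΔ, hα, hβ, hc, ht⟩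
      set M := Finset.univ.sup' hne (fun k => Γ k + Δ k) with hM
      have hMk : ∀ k, Γ k + Δ k ≤ M := by
        intro k
        exact Finset.le_sup' (fun k => Γ k + Δ k) (Finset.mem_univ k)
      have hM0 : 0 ≤ M := by
        have := hMk ⟨0, hN⟩
        have := hΓ ⟨0, hN⟩
        have := hΔ ⟨0, hN⟩
        linarith
      have hsum : ∑ k, (Δ k - Γ k) * x0 k ≤ M * S := by
        rw [hSdef, Finset.mul_sum]
        apply Finset.sum_le_sum
        intro k _
        have := hΓ k; have := hΔ k; have := hx0 k; have := hMk k
        nlinarith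
      have hsum' : -(M * S) ≤ ∑ k, (Δ k - Γ k) * x0 k := by
        rw [hSdef, Finset.mul_sum, ← Finset.sum_neg_distrib]
        apply Finset.sum_le_sum
        intro k _
        have := hΓ k; have := hΔ k; have := hx0 k; have := hMk k
        nlinarith
      have key : |c| ≤ M * S + (α + β) := by
        rw [abs_le]
        constructor <;> linarith [hc, hα, hβ, hsum, hsum']
      have hmin1 : min 1 (1 / S) ≤ 1 := min_le_left _ _
      have hmin2 : min 1 (1 / S) ≤ 1 / S := min_le_right _ _
      have hmin0 : 0 ≤ min 1 (1 / S) := le_min one_pos.le (by positivity)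
      have hinv : (1 / S) * S = 1 := one_div_mul_cancel hS.ne'
      rw [ht]
      have habs : 0 ≤ |c| := abs_nonneg c
      nlinarith [mul_le_mul_of_nonneg_left hmin2 (mul_nonneg hM0 hS.le),
        mul_le_mul_of_nonneg_left hmin1 (add_nonneg hα hβ),
        mul_le_mul_of_nonneg_right key hmin0]
  · intro hx
    subst hx
    constructor
    · refine ⟨fun _ => 0, fun _ => 0, max (-c) 0, max c 0,
        fun _ => le_rfl, fun _ => le_rfl, le_max_right _ _, le_max_right _ _, by
          simp; linarith [hmaxsub], ?_⟩
      rw [Finset.sup'_const]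
      simp
      linarith [hmaxadd]
    · rintro t ⟨Γ, Δ, α, β, hΓ, hΔ, hα, hβ, hc, ht⟩
      simp only [Pi.zero_apply, mul_zero, Finset.sum_const_zero] at hc
      have hM0 : 0 ≤ Finset.univ.sup' hne (fun k => Γ k + Δ k) := by
        have h1 := Finset.le_sup' (fun k => Γ k + Δ k) (Finset.mem_univ ⟨0, hN⟩)
        have := hΓ ⟨0, hN⟩; have := hΔ ⟨0, hN⟩
        linarith
      have : |c| ≤ α + β := by
        rw [abs_le]; constructor <;> linarith
      rw [ht]
      linarith
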